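/- Let A be an n×n Hermitian matrix and let Φ be an n×n correlation matrix (Hermitian positive semidefinite with all diagonal entries equal to 1). Then the vector of eigenvalues of the Hadamard (entrywise) product A∘Φ is majorized by the vector of eigenvalues of A. -/

import Mathlib

open Matrix
open scoped ComplexOrder

noncomputable section

/-- Sum of the `k` largest components of a finite real vector, expressed as the
supremum of sums over subsets of cardinality `k`. -/
def sumKLargest {ι : Type*} [Fintype ι] (a : ι → ℝ) (k : ℕ) : ℝ :=
  sSup {x : ℝ | ∃ s : Finset ι, s.card = k ∧ x = ∑ i ∈ s, a i}

/-- `a` is majorized by `b`: for every `k`, the sum of the `k` largest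
components of `a` is at most that of `b`, and the total sums are equal. -/
def MajorizedBy {ι ι' : Type*} [Fintype ι] [Fintype ι'] (a : ι → ℝ) (b : ι' → ℝ) : Prop :=
  (∀ k : ℕ, k ≤ Fintype.card ι → sumKLargest a k ≤ sumKLargest b k) ∧
    ∑ i, a i = ∑ i, b i

/-- The correlation figure `ζ(Φ) = tr(Φ²)/n²`. -/
def corrFig {ι : Type*} [Fintype ι] (Φ : Matrix ι ι ℂ) : ℝ :=
  (Matrix.trace (Φ * Φ)).re / (Fintype.card ι : ℝ) ^ 2

open scoped Matrix

section Helpers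
variable {ι : Type*} [Fintype ι] [DecidableEq ι]

lemma sumKLargest_set_eq (a : ι → ℝ) (k : ℕ) :
    {x : ℝ | ∃ s : Finset ι, s.card = k ∧ x = ∑ i ∈ s, a i} =
      ↑((Finset.univ.powersetCard k).image fun s => ∑ i ∈ s, a i) := by
  ext x
  simp only [Set.mem_setOf_eq, Finset.coe_image, Set.mem_image, Finset.mem_coe,
    Finset.mem_powersetCard_univ]
  constructor
  · rintro ⟨s, h1, h2⟩; exact ⟨s, h1, h2.symm⟩
  · rintro ⟨s, h1, h2⟩; exact ⟨s, h1, h2.symm⟩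

lemma le_sumKLargest (a : ι → ℝ) {k : ℕ} {s : Finset ι} (hs : s.card = k) :
    ∑ i ∈ s, a i ≤ sumKLargest a k := by
  apply le_csSup
  · rw [sumKLargest_set_eq]
    exact (Finset.finite_toSet _).bddAbove
  · exact ⟨s, hs, rfl⟩

lemma sumKLargest_le (a : ι → ℝ) {k : ℕ} (hk : k ≤ Fintype.card ι) {x : ℝ}
    (h : ∀ s : Finset ι, s.card = k → ∑ i ∈ s, a i ≤ x) :
    sumKLargest a k ≤ x := by
  obtain ⟨t, -, ht⟩ := Finset.exists_subset_card_eq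
    (show k ≤ (Finset.univ : Finset ι).card by simpa using hk)
  rw [sumKLargest]
  refine csSup_le ?_ ?_
  · exact ⟨∑ i ∈ t, a i, t, ht, rfl⟩
  · rintro y ⟨s, h1, rfl⟩
    exact h s h1

/-- there is a set of `k` indices carrying the `k` largest values -/
lemma exists_topk (a : ι → ℝ) {k : ℕ} (hk : k ≤ Fintype.card ι) :
    ∃ t : Finset ι, t.card = k ∧ ∀ i ∈ t, ∀ j ∉ t, a j ≤ a i := by
  induction k with
  | zero => exact ⟨∅, rfl, by simp⟩
  | succ m ih =>
    obtain ⟨t, htc, htp⟩ := ih (Nat.le_of_succ_le hk)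
    have htne : (tᶜ : Finset ι).Nonempty := by
      rw [← Finset.card_pos, Finset.card_compl, htc]
      omega
    obtain ⟨i0, hi0, hmax⟩ := Finset.exists_max_image (tᶜ) a htne
    have hi0' : i0 ∉ t := Finset.mem_compl.mp hi0
    refine ⟨insert i0 t, by rw [Finset.card_insert_of_notMem hi0', htc], ?_⟩
    intro i hi j hj
    have hjt : j ∉ t := fun h => hj (Finset.mem_insert_of_mem h)
    rcases Finset.mem_insert.mp hi with h | h
    · subst h; exact hmax j (Finset.mem_compl.mpr hjt)
    · exact htp i h j hjt

/-- substochastic weight bound -/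
lemma sum_weighted_le_sumKLargest (a c : ι → ℝ) {k : ℕ} (hk : k ≤ Fintype.card ι)
    (hc0 : ∀ i, 0 ≤ c i) (hc1 : ∀ i, c i ≤ 1) (hcs : ∑ i, c i = (k : ℝ)) :
    ∑ i, c i * a i ≤ sumKLargest a k := by
  obtain ⟨t, htc, htp⟩ := exists_topk a hk
  rcases Nat.eq_zero_or_pos k with rfl | hkpos
  · have : ∀ i, c i = 0 := by
      intro i
      have h := Finset.sum_eq_zero_iff_of_nonneg (fun j _ => hc0 j) |>.mp (by simpa using hcs)
      exact h i (Finset.mem_univ i)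
    have : ∑ i, c i * a i = ∑ i ∈ (∅ : Finset ι), a i := by simp [this]
    rw [this]
    exact le_sumKLargest a (by simp)
  · have htne : t.Nonempty := Finset.card_pos.mp (htc ▸ hkpos)
    obtain ⟨i0, hi0, hmin⟩ := Finset.exists_min_image t a htne
    set θ := a i0 with hθ
    have hθle : ∀ i ∈ t, θ ≤ a i := hmin
    have hleθ : ∀ j ∉ t, a j ≤ θ := fun j hj => htp i0 hi0 j hj
    calc ∑ i, c i * a i
        = ∑ i ∈ t, c i * a i + ∑ i ∈ tᶜ, c i * a i := (Finset.sum_add_sum_compl t _).symm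
      _ ≤ (∑ i ∈ t, (a i + (c i - 1) * θ)) + ∑ i ∈ tᶜ, c i * θ := by
          apply add_le_add
          · apply Finset.sum_le_sum
            intro i hi
            have : c i * a i = a i + (c i - 1) * a i := by ring
            rw [this]
            have h1 : (c i - 1) * a i ≤ (c i - 1) * θ :=
              mul_le_mul_of_nonpos_left (hθle i hi) (by linarith [hc1 i])
            linarith
          · apply Finset.sum_le_sum
            intro i hi
            exact mul_le_mul_of_nonneg_left (hleθ i (Finset.mem_compl.mp hi)) (hc0 i)
      _ = ∑ i ∈ t, a i + ((∑ i ∈ t, (c i - 1)) + ∑ i ∈ tᶜ, c i) * θ := by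
          rw [Finset.sum_add_distrib, ← Finset.sum_mul, ← Finset.sum_mul]; ring
      _ = ∑ i ∈ t, a i := by
          have : (∑ i ∈ t, (c i - 1)) + ∑ i ∈ tᶜ, c i
              = (∑ i ∈ t, c i + ∑ i ∈ tᶜ, c i) - k := by
            rw [Finset.sum_sub_distrib]
            simp [htc]
            ring
          rw [this, Finset.sum_add_sum_compl, hcs]
          simp
      _ ≤ sumKLargest a k := le_sumKLargest a htc

end Helpers


lemma hadamard_isHermitian {n : ℕ} {A B : Matrix (Fin n) (Fin n) ℂ}
    (hA : A.IsHermitian) (hB : B.IsHermitian) :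
    (Matrix.hadamard A B).IsHermitian := by
  ext i j
  simp only [Matrix.conjTranspose_apply, Matrix.hadamard_apply, star_mul',
    hA.apply, hB.apply]

/-- **Eigenvalue majorization under Hadamard products with correlation matrices**
(Corollary to Schur's theorem on doubly stochastic maps): for `A` Hermitian and
`Φ` a correlation matrix, the eigenvalues of `A ∘ Φ` are majorized by those of `A`. -/
theorem eigenvalues_hadamard_majorized
    (n : ℕ)
    (A Φ : Matrix (Fin n) (Fin n) ℂ)
    (hA : A.IsHermitian)
    (hΦ : Φ.PosSemidef) (hd : ∀ i, Φ i i = 1) :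
    MajorizedBy (hadamard_isHermitian hA hΦ.1).eigenvalues hA.eigenvalues := by
  classical
  set B := Matrix.hadamard A Φ with hBdef
  have hB : B.IsHermitian := hadamard_isHermitian hA hΦ.1
  set W : Matrix (Fin n) (Fin n) ℂ := (hA.eigenvectorUnitary : Matrix (Fin n) (Fin n) ℂ) with hWdef
  set V : Matrix (Fin n) (Fin n) ℂ := (hB.eigenvectorUnitary : Matrix (Fin n) (Fin n) ℂ) with hVdef
  set lam : Fin n → ℝ := hA.eigenvalues with hlam
  set mu : Fin n → ℝ := hB.eigenvalues with hmu
  -- unitarity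
  have hW1 : Wᴴ * W = 1 := by
    simpa [hWdef, Matrix.star_eq_conjTranspose] using
      (Matrix.mem_unitaryGroup_iff').mp hA.eigenvectorUnitary.2
  have hW2 : W * Wᴴ = 1 := by
    simpa [hWdef, Matrix.star_eq_conjTranspose] using
      (Matrix.mem_unitaryGroup_iff).mp hA.eigenvectorUnitary.2
  have hV1 : Vᴴ * V = 1 := by
    simpa [hVdef, Matrix.star_eq_conjTranspose] using
      (Matrix.mem_unitaryGroup_iff').mp hB.eigenvectorUnitary.2
  have hV2 : V * Vᴴ = 1 := by
    simpa [hVdef, Matrix.star_eq_conjTranspose] using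
      (Matrix.mem_unitaryGroup_iff).mp hB.eigenvectorUnitary.2
  -- D matrix
  set D : Fin n → Fin n → ℂ := fun k l =>
    ∑ i, ∑ j, (starRingEnd ℂ) (V i k) * Φ i j * (W i l * (starRingEnd ℂ) (W j l)) * V j k
    with hDdef
  -- spectral entrywise for A
  have hAent : ∀ i j, A i j = ∑ l, (lam l : ℂ) * (W i l * (starRingEnd ℂ) (W j l)) := by
    intro i j
    rw [hlam]
    conv_lhs => rw [hA.spectral_theorem, Unitary.conjStarAlgAut_apply]
    rw [Matrix.mul_apply]
    refine Finset.sum_congr rfl fun l _ => ?_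
    simp only [Matrix.star_apply, RCLike.star_def, Function.comp_apply, Matrix.mul_diagonal]
    rw [← hWdef, mul_right_comm]
    exact (mul_comm _ _)
  -- mu in terms of quadratic form
  have hmuq : ∀ k, (mu k : ℂ) =
      ∑ i, ∑ j, (starRingEnd ℂ) (V i k) * B i j * V j k := by
    intro k
    have h := hB.conjStarAlgAut_star_eigenvectorUnitary
    rw [Unitary.conjStarAlgAut_star_apply] at h
    have h2 := congrArg (fun M => M k k) h
    simp only [Matrix.diagonal_apply_eq, Function.comp_apply] at h2
    rw [hmu]
    rw [show (RCLike.ofReal (hB.eigenvalues k) : ℂ) = ((hB.eigenvalues k : ℝ) : ℂ) from rfl] at h2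
    rw [← h2]
    simp only [Matrix.mul_apply, Finset.sum_mul, Matrix.star_apply, RCLike.star_def]
    rw [Finset.sum_comm]
  -- mu = D * lam
  have hmuD : ∀ k, (mu k : ℂ) = ∑ l, (lam l : ℂ) * D k l := by
    intro k
    rw [hmuq k]
    have : ∀ i j, B i j = ∑ l, (lam l : ℂ) * (W i l * (starRingEnd ℂ) (W j l)) * Φ i j := by
      intro i j
      rw [hBdef, Matrix.hadamard_apply, hAent i j, Finset.sum_mul]
    simp only [this]
    rw [hDdef]
    simp only [Finset.mul_sum, Finset.sum_mul]
    refine Eq.symm ?_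
    rw [Finset.sum_comm]
    refine Finset.sum_congr rfl fun i _ => ?_
    rw [Finset.sum_comm]
    refine Finset.sum_congr rfl fun j _ => Finset.sum_congr rfl fun l _ => by ring
  -- row sums
  have hrow : ∀ k, ∑ l, D k l = 1 := by
    intro k
    rw [hDdef]
    simp only
    rw [Finset.sum_comm]
    have : ∀ i, ∑ l, ∑ j, (starRingEnd ℂ) (V i k) * Φ i j * (W i l * (starRingEnd ℂ) (W j l)) * V j k
        = ∑ j, (starRingEnd ℂ) (V i k) * Φ i j * V j k * ((W * Wᴴ) i j) := by
      intro i
      rw [Finset.sum_comm]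
      refine Finset.sum_congr rfl fun j _ => ?_
      rw [Matrix.mul_apply, Finset.mul_sum]
      refine Finset.sum_congr rfl fun l _ => ?_
      simp only [Matrix.conjTranspose_apply, RCLike.star_def]
      ring
    simp only [this, hW2, Matrix.one_apply]
    have : ∀ i, ∑ j, (starRingEnd ℂ) (V i k) * Φ i j * V j k * (if i = j then (1:ℂ) else 0)
        = (starRingEnd ℂ) (V i k) * V i k := by
      intro i
      rw [Finset.sum_eq_single i]
      · rw [hd i]; simp
      · intro j _ hj
        rw [if_neg (Ne.symm hj), mul_zero]
      · simp
    simp only [this]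
    have : ∑ i, (starRingEnd ℂ) (V i k) * V i k = (Vᴴ * V) k k := by
      rw [Matrix.mul_apply]
      refine Finset.sum_congr rfl fun i _ => ?_
      simp only [Matrix.conjTranspose_apply, RCLike.star_def]
    rw [this, hV1, Matrix.one_apply_eq]
  -- column sums
  have hcol : ∀ l, ∑ k, D k l = 1 := by
    intro l
    rw [hDdef]
    simp only
    rw [Finset.sum_comm]
    have : ∀ i, ∑ k, ∑ j, (starRingEnd ℂ) (V i k) * Φ i j * (W i l * (starRingEnd ℂ) (W j l)) * V j k
        = ∑ j, Φ i j * (W i l * (starRingEnd ℂ) (W j l)) * ((V * Vᴴ) j i) := by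
      intro i
      rw [Finset.sum_comm]
      refine Finset.sum_congr rfl fun j _ => ?_
      rw [Matrix.mul_apply, Finset.mul_sum]
      refine Finset.sum_congr rfl fun k _ => ?_
      simp only [Matrix.conjTranspose_apply, RCLike.star_def]
      ring
    simp only [this, hV2, Matrix.one_apply]
    have : ∀ i, ∑ j, Φ i j * (W i l * (starRingEnd ℂ) (W j l)) * (if j = i then (1:ℂ) else 0)
        = (starRingEnd ℂ) (W i l) * W i l := by
      intro i
      rw [Finset.sum_eq_single i]
      · rw [hd i]; simp; ring
      · intro j _ hj
        simp [hj]
      · simp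
    simp only [this]
    have : ∑ i, (starRingEnd ℂ) (W i l) * W i l = (Wᴴ * W) l l := by
      rw [Matrix.mul_apply]
      refine Finset.sum_congr rfl fun i _ => ?_
      simp only [Matrix.conjTranspose_apply, RCLike.star_def]
    rw [this, hW1, Matrix.one_apply_eq]
  -- nonnegativity
  have hDnn : ∀ k l, 0 ≤ D k l := by
    intro k l
    have hN : (Matrix.diagonal (fun i => W i l) * Φ *
        (Matrix.diagonal (fun i => W i l))ᴴ).PosSemidef :=
      hΦ.mul_mul_conjTranspose_same _
    have := hN.dotProduct_mulVec_nonneg (fun i => V i k)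
    convert this using 1
    rw [hDdef]
    simp only [dotProduct, Matrix.mulVec, Matrix.diagonal_conjTranspose,
      Matrix.mul_diagonal, Matrix.diagonal_mul, Pi.star_apply, RCLike.star_def, Finset.mul_sum]
    refine Finset.sum_congr rfl fun i _ => Finset.sum_congr rfl fun j _ => by ring
  -- real doubly stochastic matrix
  set d : Fin n → Fin n → ℝ := fun k l => (D k l).re with hddef
  have hDre : ∀ k l, D k l = ((d k l : ℝ) : ℂ) := by
    intro k l
    have h := hDnn k l
    rw [Complex.le_def] at h
    simp only [Complex.zero_re, Complex.zero_im] at h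
    exact Complex.ext rfl (by simp [hddef, h.2.symm])
  have hdnn : ∀ k l, 0 ≤ d k l := by
    intro k l
    have h := hDnn k l
    rw [Complex.le_def] at h
    simpa [hddef] using h.1
  have hdrow : ∀ k, ∑ l, d k l = 1 := by
    intro k
    have := hrow k
    simp only [hDre] at this
    exact_mod_cast (by push_cast at this ⊢; exact_mod_cast this : (∑ l, (d k l : ℂ)) = 1)
  have hdcol : ∀ l, ∑ k, d k l = 1 := by
    intro l
    have := hcol l
    simp only [hDre] at this
    exact_mod_cast (by push_cast at this ⊢; exact_mod_cast this : (∑ k, (d k l : ℂ)) = 1)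
  have hmude : ∀ k, mu k = ∑ l, lam l * d k l := by
    intro k
    have := hmuD k
    simp only [hDre] at this
    exact_mod_cast this
  constructor
  · intro k hk
    have hk' : k ≤ Fintype.card (Fin n) := hk
    apply sumKLargest_le _ hk'
    intro s hs
    have hsum : ∑ m ∈ s, mu m = ∑ l, (∑ m ∈ s, d m l) * lam l := by
      rw [Finset.sum_congr rfl fun m _ => hmude m, Finset.sum_comm]
      exact Finset.sum_congr rfl fun l _ => by rw [Finset.sum_mul]; exact Finset.sum_congr rfl fun m _ => (mul_comm _ _)
    rw [hsum]
    apply sum_weighted_le_sumKLargest _ _ hk'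
    · intro l
      exact Finset.sum_nonneg fun m _ => hdnn m l
    · intro l
      calc ∑ m ∈ s, d m l ≤ ∑ m, d m l :=
            Finset.sum_le_sum_of_subset_of_nonneg (Finset.subset_univ s) fun m _ _ => hdnn m l
        _ = 1 := hdcol l
    · rw [Finset.sum_comm]
      rw [Finset.sum_congr rfl fun m (_ : m ∈ s) => hdrow m]
      simp [hs]
  · calc ∑ k, mu k = ∑ k, ∑ l, lam l * d k l := Finset.sum_congr rfl fun k _ => hmude k
      _ = ∑ l, lam l * ∑ k, d k l := by
          rw [Finset.sum_comm]
          exact Finset.sum_congr rfl fun l _ => (Finset.mul_sum _ _ _).symm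
      _ = ∑ l, lam l := by simp [hdcol]


end
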